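/- With the same block decomposition, if L_pc ∘ L_cc^j ∘ L_cp = 0 for all j < n, then the P-column of L^n satisfies (L^n)_pp = L_pp^n and (L^n)_cp = ∑_{j=1}^{n} L_cc^{j-1} ∘ L_cp ∘ L_pp^{n-j}. -/

import Mathlib

section Aux

variable {R : Type*} [Ring R]

private lemma fpow_abs (f C B : R) (hfB : f * B = B) (hfC : f * C = C) :
    ∀ i : ℕ, f * (C ^ i * B) = C ^ i * B := by
  intro i
  cases i with
  | zero => simpa using hfB
  | succ m => rw [pow_succ', mul_assoc, ← mul_assoc f, hfC]

private lemma epow_abs (e C B : R) (heB : e * B = 0) (heC : e * C = 0) :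
    ∀ i : ℕ, e * (C ^ i * B) = 0 := by
  intro i
  cases i with
  | zero => simpa using heB
  | succ m => rw [pow_succ', mul_assoc, ← mul_assoc e, heC, zero_mul]

private lemma BPe_abs (B P e : R) (hBe : B * e = B) (hPe : P * e = P) :
    ∀ m : ℕ, B * P ^ m * e = B * P ^ m := by
  intro m
  cases m with
  | zero => simpa using hBe
  | succ k => rw [pow_succ, ← mul_assoc, mul_assoc (B * P ^ k), hPe]

private lemma col_aux (L e f P C B A : R) (n : ℕ)
    (he : e * e = e) (heP : e * P = P) (hPe : P * e = P) (hBe : B * e = B)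
    (hfB : f * B = B) (hfC : f * C = C)
    (hLe : L * e = P + B) (hLf : L * f = A + C)
    (h : ∀ j < n, A * C ^ j * B = 0) :
    L ^ n * e = e * P ^ n * e +
      ∑ i ∈ Finset.range n, C ^ i * B * P ^ (n - 1 - i) := by
  induction n with
  | zero => simp [he]
  | succ n ih =>
    have ih' := ih (fun j hj => h j (hj.trans n.lt_succ_self))
    have e1 : L * (e * P ^ n * e) = e * P ^ (n + 1) * e + B * P ^ n := by
      calc L * (e * P ^ n * e) = (L * e) * (P ^ n * e) := by
            rw [mul_assoc e, ← mul_assoc L]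
        _ = P * (P ^ n * e) + B * (P ^ n * e) := by rw [hLe, add_mul]
        _ = e * P ^ (n + 1) * e + B * P ^ n := by
            rw [← mul_assoc P, ← pow_succ', ← mul_assoc B, BPe_abs B P e hBe hPe]
            congr 1
            have h2 : e * P ^ (n + 1) = P ^ (n + 1) := by
              rw [pow_succ', ← mul_assoc, heP]
            rw [h2]
    have e2 : L * (∑ i ∈ Finset.range n, C ^ i * B * P ^ (n - 1 - i)) =
        ∑ i ∈ Finset.range n, C ^ (i + 1) * B * P ^ (n - 1 - i) := by
      rw [Finset.mul_sum]
      refine Finset.sum_congr rfl fun i hi => ?_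
      have hi' : i < n + 1 := (Finset.mem_range.mp hi).trans n.lt_succ_self
      have hT : f * (C ^ i * B * P ^ (n - 1 - i)) = C ^ i * B * P ^ (n - 1 - i) := by
        rw [← mul_assoc f, fpow_abs f C B hfB hfC]
      calc L * (C ^ i * B * P ^ (n - 1 - i))
          = (L * f) * (C ^ i * B * P ^ (n - 1 - i)) := by
            conv_rhs => rw [mul_assoc, hT]
        _ = A * (C ^ i * B * P ^ (n - 1 - i)) + C * (C ^ i * B * P ^ (n - 1 - i)) := by
            rw [hLf, add_mul]
        _ = C ^ (i + 1) * B * P ^ (n - 1 - i) := by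
            rw [← mul_assoc A, ← mul_assoc A, h i hi', zero_mul, zero_add,
              ← mul_assoc C, ← mul_assoc C, ← pow_succ']
    rw [pow_succ', mul_assoc, ih', mul_add, e1, e2, Finset.sum_range_succ']
    have h3 : ∀ i ∈ Finset.range n,
        C ^ (i + 1) * B * P ^ (n + 1 - 1 - (i + 1)) = C ^ (i + 1) * B * P ^ (n - 1 - i) := by
      intro i _
      congr 2
      omega
    rw [Finset.sum_congr rfl h3]
    simp only [pow_zero, one_mul, Nat.add_sub_cancel, Nat.sub_zero]
    abel

end Aux

/-- If `L_pc ∘ L_cc^j ∘ L_cp = 0` for all `j < n`, then the P-column of `L^n`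
satisfies `(L^n)_pp = L_pp^n` and `(L^n)_cp = ∑_{j=1}^n L_cc^{j-1} L_cp L_pp^{n-j}`. -/
theorem structure_lemma_column (V : Type*) [AddCommGroup V] [Module ℂ V] [FiniteDimensional ℂ V]
    (L Δ : Module.End ℂ V) (hΔ : Δ * Δ = Δ) (n : ℕ)
    (h : ∀ j < n, (Δ * L * (1 - Δ)) * ((1 - Δ) * L * (1 - Δ)) ^ j * ((1 - Δ) * L * Δ) = 0) :
    Δ * L ^ n * Δ = Δ * (Δ * L * Δ) ^ n * Δ ∧
    (1 - Δ) * L ^ n * Δ =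
      ∑ j ∈ Finset.Icc 1 n,
        ((1 - Δ) * L * (1 - Δ)) ^ (j - 1) * ((1 - Δ) * L * Δ) * (Δ * L * Δ) ^ (n - j) := by
  have hΔc : Δ * (1 - Δ) = 0 := by rw [mul_sub, hΔ]; simp
  have hcΔ : (1 - Δ) * Δ = 0 := by rw [sub_mul, hΔ]; simp
  have hcc : (1 - Δ) * (1 - Δ) = 1 - Δ := by rw [mul_sub, sub_mul, sub_mul, hΔ]; noncomm_ring
  have heP : Δ * (Δ * L * Δ) = Δ * L * Δ := by rw [← mul_assoc, ← mul_assoc, hΔ]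
  have hPe : (Δ * L * Δ) * Δ = Δ * L * Δ := by rw [mul_assoc, hΔ]
  have hBe : ((1 - Δ) * L * Δ) * Δ = (1 - Δ) * L * Δ := by rw [mul_assoc, hΔ]
  have hfB : (1 - Δ) * ((1 - Δ) * L * Δ) = (1 - Δ) * L * Δ := by
    rw [← mul_assoc, ← mul_assoc, hcc]
  have hfC : (1 - Δ) * ((1 - Δ) * L * (1 - Δ)) = (1 - Δ) * L * (1 - Δ) := by
    rw [← mul_assoc, ← mul_assoc, hcc]
  have heB : Δ * ((1 - Δ) * L * Δ) = 0 := by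
    rw [← mul_assoc, ← mul_assoc, hΔc, zero_mul, zero_mul]
  have heC : Δ * ((1 - Δ) * L * (1 - Δ)) = 0 := by
    rw [← mul_assoc, ← mul_assoc, hΔc, zero_mul, zero_mul]
  have hLe : L * Δ = Δ * L * Δ + (1 - Δ) * L * Δ := by noncomm_ring
  have hLf : L * (1 - Δ) = Δ * L * (1 - Δ) + (1 - Δ) * L * (1 - Δ) := by noncomm_ring
  have key := col_aux L Δ (1 - Δ) (Δ * L * Δ) ((1 - Δ) * L * (1 - Δ)) ((1 - Δ) * L * Δ)
    (Δ * L * (1 - Δ)) n hΔ heP hPe hBe hfB hfC hLe hLf h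
  constructor
  · rw [mul_assoc, key, mul_add, Finset.mul_sum]
    have hz : ∀ i ∈ Finset.range n,
        Δ * (((1 - Δ) * L * (1 - Δ)) ^ i * ((1 - Δ) * L * Δ) * (Δ * L * Δ) ^ (n - 1 - i)) = 0 := by
      intro i _
      rw [← mul_assoc Δ, epow_abs Δ _ _ heB heC, zero_mul]
    rw [Finset.sum_congr rfl hz, Finset.sum_const_zero, add_zero, ← mul_assoc, ← mul_assoc, hΔ]
  · rw [mul_assoc, key, mul_add, Finset.mul_sum]
    have h1 : (1 - Δ) * (Δ * (Δ * L * Δ) ^ n * Δ) = 0 := by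
      rw [← mul_assoc, ← mul_assoc, hcΔ, zero_mul, zero_mul]
    have h2 : ∀ i ∈ Finset.range n,
        (1 - Δ) * (((1 - Δ) * L * (1 - Δ)) ^ i * ((1 - Δ) * L * Δ) * (Δ * L * Δ) ^ (n - 1 - i)) =
        ((1 - Δ) * L * (1 - Δ)) ^ i * ((1 - Δ) * L * Δ) * (Δ * L * Δ) ^ (n - 1 - i) := by
      intro i _
      rw [← mul_assoc (1 - Δ), fpow_abs (1 - Δ) _ _ hfB hfC]
    rw [Finset.sum_congr rfl h2, h1, zero_add, ← Finset.Ico_add_one_right_eq_Icc,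
      Finset.sum_Ico_eq_sum_range]
    refine Finset.sum_congr (by rw [Nat.add_sub_cancel]) fun i _ => ?_
    have e1 : 1 + i - 1 = i := by omega
    have e2 : n - (1 + i) = n - 1 - i := by omega
    rw [e1, e2]
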